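/- For each real m > 0 let Φ_m(x) denote the CDF of c_m(B_m − 1/2) where B_m is Beta((m+1)/m, (m+1)/m)-distributed, i.e. Φ_m(x) = (1/B(a_m,a_m)) ∫_0^{min(max(1/2 + x/c_m, 0), 1)} y^{1/m}(1−y)^{1/m} dy with a_m = (m+1)/m. Then for every x ∈ ℝ, lim_{m→0^+} Φ_m(x) = (1/√(2π)) ∫_{−∞}^{x} e^{−y²/2} dy, the standard Gaussian CDF evaluated at x. -/

import Mathlib

open Filter MeasureTheory Real

/-- The Beta function `B(a,b) = Γ(a)Γ(b)/Γ(a+b)`. -/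
noncomputable def betaFn (a b : ℝ) : ℝ := Real.Gamma a * Real.Gamma b / Real.Gamma (a + b)

/-- `ρ = m/(2(m+2))`. -/
noncomputable def rhoC (m : ℝ) : ℝ := m / (2 * (m + 2))

/-- `D = ρ^{-1/2} B(1/2, (m+1)/m)`. -/
noncomputable def DC (m : ℝ) : ℝ := rhoC m ^ (-(1 / 2) : ℝ) * betaFn (1 / 2) ((m + 1) / m)

/-- `c_m = 2^{(m+1)/(m+2)} (m+1)^{1/(m+2)} / (D^{m/(m+2)} ρ^{1/2})`. -/
noncomputable def cC (m : ℝ) : ℝ :=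
  (2 : ℝ) ^ ((m + 1) / (m + 2)) * (m + 1) ^ (1 / (m + 2)) /
    (DC m ^ (m / (m + 2)) * rhoC m ^ ((1 : ℝ) / 2))

/-- The CDF of `c_m (B_m - 1/2)` where `B_m` is Beta((m+1)/m, (m+1)/m)-distributed. -/
noncomputable def limitCDF (m x : ℝ) : ℝ :=
  (1 / betaFn ((m + 1) / m) ((m + 1) / m)) *
    ∫ y in (0 : ℝ)..(min (max (1 / 2 + x / cC m) 0) 1), y ^ (1 / m) * (1 - y) ^ (1 / m)

lemma betaFn_pos {a b : ℝ} (ha : 0 < a) (hb : 0 < b) : 0 < betaFn a b := by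
  unfold betaFn
  have := Real.Gamma_pos_of_pos ha
  have := Real.Gamma_pos_of_pos hb
  have := Real.Gamma_pos_of_pos (by linarith : (0:ℝ) < a + b)
  positivity

lemma real_beta_integral {p q : ℝ} (hp : 0 < p) (hq : 0 < q) :
    ∫ y in (0:ℝ)..1, y ^ (p - 1) * (1 - y) ^ (q - 1) = betaFn p q := by
  have key := Complex.Gamma_mul_Gamma_eq_betaIntegral (s := (p:ℂ)) (t := (q:ℂ))
    (by simpa using hp) (by simpa using hq)
  have h1 : Complex.betaIntegral p q
      = ((∫ y in (0:ℝ)..1, y ^ (p - 1) * (1 - y) ^ (q - 1) : ℝ) : ℂ) := by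
    rw [Complex.betaIntegral, ← intervalIntegral.integral_ofReal]
    refine intervalIntegral.integral_congr fun y hy => ?_
    rw [Set.uIcc_of_le zero_le_one] at hy
    rw [Complex.ofReal_mul, Complex.ofReal_cpow hy.1, Complex.ofReal_cpow (by linarith [hy.2] : (0:ℝ) ≤ 1 - y)]
    push_cast
    ring
  rw [h1, ← Complex.ofReal_add, Complex.Gamma_ofReal, Complex.Gamma_ofReal,
    Complex.Gamma_ofReal, ← Complex.ofReal_mul, ← Complex.ofReal_mul] at key
  have hg : Real.Gamma (p + q) ≠ 0 := (Real.Gamma_pos_of_pos (by linarith)).ne'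
  have := Complex.ofReal_injective key
  unfold betaFn
  field_simp
  linarith [this]

lemma gamma_ratio_tendsto :
    Tendsto (fun a : ℝ => Real.Gamma (a + 1/2) / (Real.Gamma a * Real.sqrt a))
      atTop (nhds 1) := by
  have cvx := Real.convexOn_log_Gamma
  have upper : ∀ a : ℝ, 1 ≤ a →
      Real.Gamma (a + 1/2) / (Real.Gamma a * Real.sqrt a) ≤ 1 := by
    intro a ha
    have ha0 : (0:ℝ) < a := by linarith
    have hΓa := Real.Gamma_pos_of_pos ha0
    have hmid := cvx.2 (Set.mem_Ioi.2 ha0) (Set.mem_Ioi.2 (by linarith : (0:ℝ) < a + 1))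
      (by norm_num : (0:ℝ) ≤ 1/2) (by norm_num : (0:ℝ) ≤ 1/2) (by norm_num)
    simp only [smul_eq_mul, Function.comp_apply] at hmid
    have hpt : (1/2 : ℝ) * a + (1/2) * (a + 1) = a + 1/2 := by ring
    rw [hpt] at hmid
    -- Γ(a+1/2)^2 ≤ Γ(a) * Γ(a+1)
    have hsq : Real.Gamma (a + 1/2) ^ 2 ≤ Real.Gamma a * Real.Gamma (a + 1) := by
      have h2 : Real.log (Real.Gamma (a + 1/2)) * 2
          ≤ Real.log (Real.Gamma a) + Real.log (Real.Gamma (a + 1)) := by linarith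
      have hl : Real.log (Real.Gamma (a + 1/2) ^ 2) ≤ Real.log (Real.Gamma a * Real.Gamma (a + 1)) := by
        rw [Real.log_pow, Real.log_mul hΓa.ne' (Real.Gamma_pos_of_pos (by linarith : (0:ℝ) < a + 1)).ne']
        push_cast; linarith
      exact (Real.log_le_log_iff (by positivity) (by positivity)).1 hl
    rw [Real.Gamma_add_one ha0.ne'] at hsq
    have hle : Real.Gamma (a + 1/2) ≤ Real.sqrt a * Real.Gamma a := by
      have h1 : Real.Gamma (a + 1/2) = Real.sqrt (Real.Gamma (a + 1/2) ^ 2) :=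
        (Real.sqrt_sq (Real.Gamma_pos_of_pos (by linarith)).le).symm
      rw [h1]
      calc Real.sqrt (Real.Gamma (a + 1/2) ^ 2) ≤ Real.sqrt (a * Real.Gamma a ^ 2) := by
            apply Real.sqrt_le_sqrt; nlinarith
        _ = Real.sqrt a * Real.Gamma a := by
            rw [Real.sqrt_mul ha0.le, Real.sqrt_sq hΓa.le]
    rw [div_le_one (by positivity)]
    linarith [hle]
  have lower : ∀ a : ℝ, 1 ≤ a →
      Real.sqrt a / Real.sqrt (a + 1/2)
        ≤ Real.Gamma (a + 1/2) / (Real.Gamma a * Real.sqrt a) := by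
    intro a ha
    have ha0 : (0:ℝ) < a := by linarith
    have hΓa := Real.Gamma_pos_of_pos ha0
    have hΓh := Real.Gamma_pos_of_pos (by linarith : (0:ℝ) < a + 1/2)
    have hmid := cvx.2 (Set.mem_Ioi.2 (by linarith : (0:ℝ) < a + 1/2))
      (Set.mem_Ioi.2 (by linarith : (0:ℝ) < a + 3/2))
      (by norm_num : (0:ℝ) ≤ 1/2) (by norm_num : (0:ℝ) ≤ 1/2) (by norm_num)
    simp only [smul_eq_mul, Function.comp_apply] at hmid
    have hpt : (1/2 : ℝ) * (a + 1/2) + (1/2) * (a + 3/2) = a + 1 := by ring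
    rw [hpt] at hmid
    have hsq : Real.Gamma (a + 1) ^ 2 ≤ Real.Gamma (a + 1/2) * Real.Gamma (a + 3/2) := by
      have h2 : Real.log (Real.Gamma (a + 1)) * 2
          ≤ Real.log (Real.Gamma (a + 1/2)) + Real.log (Real.Gamma (a + 3/2)) := by linarith
      have hl : Real.log (Real.Gamma (a + 1) ^ 2) ≤ Real.log (Real.Gamma (a + 1/2) * Real.Gamma (a + 3/2)) := by
        rw [Real.log_pow, Real.log_mul hΓh.ne' (Real.Gamma_pos_of_pos (by linarith : (0:ℝ) < a + 3/2)).ne']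
        push_cast; linarith
      exact (Real.log_le_log_iff (by positivity) (by positivity)).1 hl
    have h32 : Real.Gamma (a + 3/2) = (a + 1/2) * Real.Gamma (a + 1/2) := by
      have := Real.Gamma_add_one (s := a + 1/2) (show (0:ℝ) < a + 1/2 by positivity).ne'
      rw [show a + 1/2 + 1 = a + 3/2 by ring] at this
      exact this
    rw [h32, Real.Gamma_add_one ha0.ne'] at hsq
    -- a Γa ≤ √(a+1/2) Γ(a+1/2)
    have hle : a * Real.Gamma a ≤ Real.sqrt (a + 1/2) * Real.Gamma (a + 1/2) := by
      have h1 : a * Real.Gamma a = Real.sqrt ((a * Real.Gamma a) ^ 2) :=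
        (Real.sqrt_sq (by positivity)).symm
      rw [h1]
      calc Real.sqrt ((a * Real.Gamma a) ^ 2)
          ≤ Real.sqrt ((a + 1/2) * Real.Gamma (a + 1/2) ^ 2) := by
            apply Real.sqrt_le_sqrt; nlinarith
        _ = Real.sqrt (a + 1/2) * Real.Gamma (a + 1/2) := by
            rw [Real.sqrt_mul (by positivity), Real.sqrt_sq hΓh.le]
    rw [div_le_div_iff₀ (by positivity) (by positivity)]
    have hsa : Real.sqrt a * Real.sqrt a = a := Real.mul_self_sqrt ha0.le
    calc Real.sqrt a * (Real.Gamma a * Real.sqrt a)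
        = a * Real.Gamma a := by rw [mul_comm (Real.Gamma a), ← mul_assoc, hsa]
      _ ≤ Real.sqrt (a + 1/2) * Real.Gamma (a + 1/2) := hle
      _ = Real.Gamma (a + 1/2) * Real.sqrt (a + 1/2) := mul_comm _ _
  have hlow : Tendsto (fun a : ℝ => Real.sqrt a / Real.sqrt (a + 1/2)) atTop (nhds 1) := by
    have h1 : Tendsto (fun a : ℝ => a / (a + 1/2)) atTop (nhds 1) := by
      have hd : Tendsto (fun a : ℝ => 1 + (1/2) * a⁻¹) atTop (nhds (1 + (1/2) * 0)) :=
        tendsto_const_nhds.add (tendsto_inv_atTop_zero.const_mul _)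
      norm_num at hd
      have hq : Tendsto (fun a : ℝ => (1:ℝ) / (1 + (1/2) * a⁻¹)) atTop (nhds (1/1)) :=
        tendsto_const_nhds.div hd one_ne_zero
      norm_num at hq
      apply hq.congr'
      filter_upwards [eventually_gt_atTop (0:ℝ)] with a ha
      have he : (1:ℝ) + 1/2 * a⁻¹ = (a + 1/2)/a := by field_simp
      rw [he, inv_div]
    have h2 : Tendsto (fun a : ℝ => Real.sqrt (a / (a + 1/2))) atTop (nhds 1) := by
      have := (Real.continuous_sqrt.tendsto 1).comp h1
      simpa [Function.comp_def] using this
    apply h2.congr'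
    filter_upwards [eventually_gt_atTop (0:ℝ)] with a ha
    rw [Real.sqrt_div ha.le]
  refine tendsto_of_tendsto_of_tendsto_of_le_of_le' hlow tendsto_const_nhds ?_ ?_
  · filter_upwards [eventually_ge_atTop (1:ℝ)] with a ha using lower a ha
  · filter_upwards [eventually_ge_atTop (1:ℝ)] with a ha using upper a ha

lemma rhoC_pos {m : ℝ} (hm : 0 < m) : 0 < rhoC m := by
  unfold rhoC; positivity

lemma DC_pos {m : ℝ} (hm : 0 < m) : 0 < DC m := by
  unfold DC
  exact mul_pos (Real.rpow_pos_of_pos (rhoC_pos hm) _)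
    (betaFn_pos (by norm_num) (by positivity))

lemma cC_pos {m : ℝ} (hm : 0 < m) : 0 < cC m := by
  unfold cC
  have h1 : (0:ℝ) < (2:ℝ) ^ ((m + 1) / (m + 2)) := Real.rpow_pos_of_pos (by norm_num) _
  have h2 : (0:ℝ) < (m + 1) ^ (1 / (m + 2)) := Real.rpow_pos_of_pos (by linarith) _
  have h3 : (0:ℝ) < DC m ^ (m / (m + 2)) := Real.rpow_pos_of_pos (DC_pos hm) _
  have h4 : (0:ℝ) < rhoC m ^ ((1:ℝ) / 2) := Real.rpow_pos_of_pos (rhoC_pos hm) _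
  positivity

lemma am_tendsto : Tendsto (fun m : ℝ => (m + 1) / m) (nhdsWithin 0 (Set.Ioi 0)) atTop := by
  have h : Tendsto (fun m : ℝ => 1 + m⁻¹) (nhdsWithin 0 (Set.Ioi 0)) atTop :=
    tendsto_atTop_add_const_left _ 1 tendsto_inv_nhdsGT_zero
  apply h.congr'
  filter_upwards [self_mem_nhdsWithin] with m hm
  rw [Set.mem_Ioi] at hm
  field_simp

lemma DC_tendsto : Tendsto DC (nhdsWithin 0 (Set.Ioi 0)) (nhds (2 * Real.sqrt π)) := by
  have hr : Tendsto (fun m : ℝ =>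
      Real.Gamma ((m+1)/m + 1/2) / (Real.Gamma ((m+1)/m) * Real.sqrt ((m+1)/m)))
      (nhdsWithin 0 (Set.Ioi 0)) (nhds 1) := gamma_ratio_tendsto.comp am_tendsto
  have hrinv := hr.inv₀ one_ne_zero
  rw [inv_one] at hrinv
  have hF : Tendsto (fun m : ℝ => Real.sqrt π * Real.sqrt (2 * (m + 2) / (m + 1)))
      (nhdsWithin 0 (Set.Ioi 0)) (nhds (Real.sqrt π * Real.sqrt (2 * (0 + 2) / (0 + 1)))) := by
    apply Tendsto.mono_left _ nhdsWithin_le_nhds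
    have hca : ContinuousAt (fun m : ℝ => Real.sqrt π * Real.sqrt (2 * (m + 2) / (m + 1))) 0 := by
      apply ContinuousAt.mul continuousAt_const
      apply Real.continuous_sqrt.continuousAt.comp
      exact ContinuousAt.div (by fun_prop) (by fun_prop) (by norm_num)
    have := hca.tendsto
    norm_num at this ⊢
    exact this
  norm_num at hF
  have h4 : Real.sqrt (4:ℝ) = 2 := by
    rw [show (4:ℝ) = 2^2 by norm_num, Real.sqrt_sq (by norm_num)]
  have := hF.mul hrinv
  rw [mul_one] at this
  have hmain : Tendsto DC (nhdsWithin 0 (Set.Ioi 0))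
      (nhds (Real.sqrt π * 2)) := by
    apply this.congr'
    filter_upwards [self_mem_nhdsWithin] with m hm
    rw [Set.mem_Ioi] at hm
    set a := (m+1)/m with ha_def
    have ha : 0 < a := by positivity
    have hΓa := Real.Gamma_pos_of_pos ha
    have hΓh := Real.Gamma_pos_of_pos (show (0:ℝ) < a + 1/2 by linarith)
    have hsa : (0:ℝ) < Real.sqrt a := Real.sqrt_pos.2 ha
    have hrne : Real.Gamma (a + 1/2) / (Real.Gamma a * Real.sqrt a) ≠ 0 := by positivity
    have hkey : Real.sqrt (2 * (m + 2) / (m + 1)) * Real.sqrt a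
        = (Real.sqrt (rhoC m))⁻¹ := by
      rw [← Real.sqrt_mul (by positivity), ← Real.sqrt_inv]
      congr 1
      unfold rhoC
      rw [ha_def]
      field_simp
    have hbeta : betaFn (1/2) a = Real.sqrt π * Real.Gamma a / Real.Gamma (a + 1/2) := by
      unfold betaFn
      rw [Real.Gamma_one_half_eq, add_comm (1/2 : ℝ) a]
    have hrho : rhoC m ^ (-(1/2) : ℝ) = (Real.sqrt (rhoC m))⁻¹ := by
      rw [Real.rpow_neg (rhoC_pos hm).le, Real.sqrt_eq_rpow]
    show Real.sqrt π * Real.sqrt (2 * (m + 2) / (m + 1))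
        * (Real.Gamma (a + 1/2) / (Real.Gamma a * Real.sqrt a))⁻¹ = DC m
    unfold DC
    rw [← ha_def, hbeta, hrho, ← hkey]
    field_simp
  rw [mul_comm] at hmain
  exact hmain

lemma sqrt_rho_cC {m : ℝ} (hm : 0 < m) :
    Real.sqrt (rhoC m) * cC m
      = (2:ℝ) ^ ((m + 1) / (m + 2)) * (m + 1) ^ (1 / (m + 2)) / DC m ^ (m / (m + 2)) := by
  have h3 : (0:ℝ) < DC m ^ (m / (m + 2)) := Real.rpow_pos_of_pos (DC_pos hm) _
  have h4 : (0:ℝ) < Real.sqrt (rhoC m) := Real.sqrt_pos.2 (rhoC_pos hm)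
  unfold cC
  rw [← Real.sqrt_eq_rpow]
  field_simp

lemma N_tendsto : Tendsto (fun m : ℝ => Real.sqrt (rhoC m) * cC m)
    (nhdsWithin 0 (Set.Ioi 0)) (nhds (Real.sqrt 2)) := by
  have t1 : Tendsto (fun m : ℝ => (2:ℝ) ^ ((m + 1) / (m + 2)))
      (nhdsWithin 0 (Set.Ioi 0)) (nhds ((2:ℝ) ^ ((1:ℝ)/2))) := by
    apply Filter.Tendsto.rpow tendsto_const_nhds _ (Or.inl (by norm_num))
    apply Tendsto.mono_left _ nhdsWithin_le_nhds
    have hca : ContinuousAt (fun m : ℝ => (m + 1) / (m + 2)) 0 :=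
      ContinuousAt.div (by fun_prop) (by fun_prop) (by norm_num)
    have := hca.tendsto
    norm_num at this
    exact this
  have t2 : Tendsto (fun m : ℝ => (m + 1) ^ (1 / (m + 2)))
      (nhdsWithin 0 (Set.Ioi 0)) (nhds ((1:ℝ) ^ ((1:ℝ)/2))) := by
    apply Filter.Tendsto.rpow _ _ (Or.inl one_ne_zero)
    · apply Tendsto.mono_left _ nhdsWithin_le_nhds
      have : Tendsto (fun m : ℝ => m + 1) (nhds 0) (nhds (0+1)) :=
        Continuous.tendsto (by continuity) 0
      norm_num at this
      exact this
    · apply Tendsto.mono_left _ nhdsWithin_le_nhds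
      have hca : ContinuousAt (fun m : ℝ => 1 / (m + 2)) 0 :=
        ContinuousAt.div (by fun_prop) (by fun_prop) (by norm_num)
      have := hca.tendsto
      norm_num [one_div] at this ⊢
      exact this
  have t3 : Tendsto (fun m : ℝ => DC m ^ (m / (m + 2)))
      (nhdsWithin 0 (Set.Ioi 0)) (nhds ((2 * Real.sqrt π) ^ ((0:ℝ)))) := by
    apply Filter.Tendsto.rpow DC_tendsto _ (Or.inl (by positivity))
    apply Tendsto.mono_left _ nhdsWithin_le_nhds
    have hca : ContinuousAt (fun m : ℝ => m / (m + 2)) 0 :=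
      ContinuousAt.div (by fun_prop) (by fun_prop) (by norm_num)
    have := hca.tendsto
    norm_num at this
    exact this
  rw [Real.rpow_zero] at t3
  rw [Real.one_rpow] at t2
  have := (t1.mul t2).div t3 one_ne_zero
  rw [mul_one, div_one, ← Real.sqrt_eq_rpow] at this
  apply this.congr'
  filter_upwards [self_mem_nhdsWithin] with m hm
  exact (sqrt_rho_cC hm).symm

lemma sqrt_rho_tendsto : Tendsto (fun m : ℝ => Real.sqrt (rhoC m))
    (nhdsWithin 0 (Set.Ioi 0)) (nhdsWithin 0 (Set.Ioi 0)) := by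
  rw [tendsto_nhdsWithin_iff]
  constructor
  · have hca : ContinuousAt (fun m : ℝ => Real.sqrt (rhoC m)) 0 := by
      apply Real.continuous_sqrt.continuousAt.comp
      unfold rhoC
      exact ContinuousAt.div (by fun_prop) (by fun_prop) (by norm_num)
    have h2 := hca.tendsto
    have h0 : rhoC 0 = 0 := by unfold rhoC; norm_num
    rw [h0, Real.sqrt_zero] at h2
    exact h2.mono_left nhdsWithin_le_nhds
  · filter_upwards [self_mem_nhdsWithin] with m hm
    exact Set.mem_Ioi.2 (Real.sqrt_pos.2 (rhoC_pos hm))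

lemma cC_atTop : Tendsto cC (nhdsWithin 0 (Set.Ioi 0)) atTop := by
  have h1 : Tendsto (fun m : ℝ => (Real.sqrt (rhoC m))⁻¹) (nhdsWithin 0 (Set.Ioi 0)) atTop :=
    tendsto_inv_nhdsGT_zero.comp sqrt_rho_tendsto
  have := N_tendsto.pos_mul_atTop (Real.sqrt_pos.2 (by norm_num)) h1
  apply this.congr'
  filter_upwards [self_mem_nhdsWithin] with m hm
  rw [Set.mem_Ioi] at hm
  have h4 : Real.sqrt (rhoC m) ≠ 0 := (Real.sqrt_pos.2 (rhoC_pos hm)).ne'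
  field_simp

lemma mcC_sq_tendsto : Tendsto (fun m : ℝ => m * cC m ^ 2)
    (nhdsWithin 0 (Set.Ioi 0)) (nhds 8) := by
  have t1 : Tendsto (fun m : ℝ => 2 * (m + 2)) (nhdsWithin 0 (Set.Ioi 0)) (nhds 4) := by
    apply Tendsto.mono_left _ nhdsWithin_le_nhds
    have : Tendsto (fun m : ℝ => 2 * (m + 2)) (nhds 0) (nhds (2*(0+2))) :=
      Continuous.tendsto (by continuity) 0
    norm_num at this
    exact this
  have t2 : Tendsto (fun m : ℝ => (Real.sqrt (rhoC m) * cC m) ^ 2)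
      (nhdsWithin 0 (Set.Ioi 0)) (nhds ((Real.sqrt 2) ^ 2)) := N_tendsto.pow 2
  rw [Real.sq_sqrt (by norm_num : (0:ℝ) ≤ 2)] at t2
  have := t1.mul t2
  norm_num at this
  apply this.congr'
  filter_upwards [self_mem_nhdsWithin] with m hm
  rw [Set.mem_Ioi] at hm
  have hrho := rhoC_pos hm
  rw [mul_pow, Real.sq_sqrt hrho.le]
  unfold rhoC
  field_simp

lemma P_tendsto : Tendsto (fun m : ℝ => 2 / (DC m * (Real.sqrt (rhoC m) * cC m)))
    (nhdsWithin 0 (Set.Ioi 0)) (nhds (1 / Real.sqrt (2 * π))) := by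
  have hd := DC_tendsto.mul N_tendsto
  have hne : (2 * Real.sqrt π) * Real.sqrt 2 ≠ 0 := by positivity
  have hc : Tendsto (fun _ : ℝ => (2:ℝ)) (nhdsWithin 0 (Set.Ioi 0)) (nhds 2) := tendsto_const_nhds
  have := hc.div hd hne
  convert this using 2
  · rfl
  rw [Real.sqrt_mul (by norm_num : (0:ℝ) ≤ 2) π]
  rw [div_eq_div_iff (by positivity) (by positivity)]
  ring

/-- The rescaled integrand. -/
noncomputable def FF (m t : ℝ) : ℝ :=
  (betaFn ((m + 1) / m) ((m + 1) / m) * cC m)⁻¹ *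
    ((1/2 + t / cC m) ^ (1/m) * (1/2 - t / cC m) ^ (1/m))

/-- The prefactor. -/
noncomputable def PP (m : ℝ) : ℝ := 2 / (DC m * (Real.sqrt (rhoC m) * cC m))

lemma contF {m : ℝ} (hm : 0 < m) :
    Continuous fun y : ℝ => y ^ (1/m) * (1 - y) ^ (1/m) := by
  rw [continuous_iff_continuousAt]
  intro y
  apply ContinuousAt.mul
  · exact Real.continuousAt_rpow_const y (1/m) (Or.inr (by positivity))
  · exact (Real.continuousAt_rpow_const (1 - y) (1/m) (Or.inr (by positivity))).comp
      (by fun_prop)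

lemma hB12 {m : ℝ} (hm : 0 < m) :
    betaFn (1/2) ((m + 1) / m) = DC m * Real.sqrt (rhoC m) := by
  have h4 : Real.sqrt (rhoC m) ≠ 0 := (Real.sqrt_pos.2 (rhoC_pos hm)).ne'
  unfold DC
  rw [Real.rpow_neg (rhoC_pos hm).le, ← Real.sqrt_eq_rpow]
  field_simp

lemma dup' {a : ℝ} (ha : 0 < a) :
    betaFn a a = (2:ℝ) ^ ((1:ℝ) - 2 * a) * betaFn (1/2) a := by
  have hdup := Real.Gamma_mul_Gamma_add_half a
  have hΓa := Real.Gamma_pos_of_pos ha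
  have hΓh := Real.Gamma_pos_of_pos (show (0:ℝ) < a + 1/2 by linarith)
  have hΓ2a := Real.Gamma_pos_of_pos (show (0:ℝ) < 2 * a by linarith)
  unfold betaFn
  rw [Real.Gamma_one_half_eq, show a + a = 2 * a by ring, show (1/2 : ℝ) + a = a + 1/2 by ring]
  rw [mul_div_assoc', div_eq_div_iff hΓ2a.ne' hΓh.ne']
  linear_combination Real.Gamma a * hdup

lemma dup {m : ℝ} (hm : 0 < m) :
    betaFn ((m + 1) / m) ((m + 1) / m)
      = (2:ℝ) ^ ((1:ℝ) - 2 * ((m + 1) / m)) * (DC m * Real.sqrt (rhoC m)) := by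
  rw [dup' (show (0:ℝ) < (m+1)/m by positivity), hB12 hm]

lemma Pid {m : ℝ} (hm : 0 < m) :
    ((1:ℝ)/4) ^ ((1:ℝ)/m) / (betaFn ((m + 1) / m) ((m + 1) / m) * cC m) = PP m := by
  have hq : ((1:ℝ)/4) ^ ((1:ℝ)/m) = 2 * (2:ℝ) ^ ((1:ℝ) - 2 * ((m + 1) / m)) := by
    have h14 : ((1:ℝ)/4) = (2:ℝ) ^ (-2 : ℝ) := by
      rw [Real.rpow_neg (by norm_num), show ((2:ℝ) ^ (2:ℝ)) = 4 by
        rw [show (2:ℝ) = ((2:ℕ):ℝ) by norm_num, Real.rpow_natCast]; norm_num]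
      norm_num
    rw [h14, mul_comm, ← Real.rpow_add_one (by norm_num : (2:ℝ) ≠ 0),
      ← Real.rpow_mul (by norm_num : (0:ℝ) ≤ 2)]
    congr 1
    field_simp
    ring
  rw [dup hm, hq]
  unfold PP
  have h1 : (0:ℝ) < (2:ℝ) ^ ((1:ℝ) - 2 * ((m+1)/m)) := Real.rpow_pos_of_pos (by norm_num) _
  have h2 := DC_pos hm
  have h3 : (0:ℝ) < Real.sqrt (rhoC m) := Real.sqrt_pos.2 (rhoC_pos hm)
  have h4 := cC_pos hm
  field_simp

lemma hX_aux {m t : ℝ} (hm : 0 < m) (hc : 2 * |t| < cC m) :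
    (0:ℝ) ≤ 1 - 4 * t^2 / cC m ^ 2 := by
  have hcpos := cC_pos hm
  have h1 : 4 * t^2 ≤ cC m ^ 2 := by nlinarith [abs_nonneg t, sq_abs t]
  have h2 : 4 * t^2 / cC m ^ 2 ≤ 1 := by
    rw [div_le_one (by positivity)]; linarith
  linarith

lemma FF_eq {m t : ℝ} (hm : 0 < m) (hc : 2 * |t| < cC m) :
    FF m t = PP m * ((1 - 4 * t^2 / cC m ^ 2) ^ ((1:ℝ)/m)) := by
  have hcpos := cC_pos hm
  have habs : |t / cC m| < 1/2 := by
    rw [abs_div, abs_of_pos hcpos, div_lt_iff₀ hcpos]; linarith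
  obtain ⟨hl, hr⟩ := abs_lt.1 habs
  have hp1 : (0:ℝ) ≤ 1/2 + t / cC m := by linarith
  have hp2 : (0:ℝ) ≤ 1/2 - t / cC m := by linarith
  have hX : (0:ℝ) ≤ 1 - 4 * t^2 / cC m ^ 2 := hX_aux hm hc
  have hmu : (1/2 + t / cC m) * (1/2 - t / cC m) = (1/4) * (1 - 4 * t^2 / cC m ^ 2) := by
    field_simp
    ring
  unfold FF
  rw [← Real.mul_rpow hp1 hp2, hmu, Real.mul_rpow (by norm_num) hX, ← Pid hm]
  ring

lemma FF_nonneg {m t : ℝ} (hm : 0 < m) (hc : 2 * |t| < cC m) : 0 ≤ FF m t := by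
  rw [FF_eq hm hc]
  have hX : (0:ℝ) ≤ 1 - 4 * t^2 / cC m ^ 2 := hX_aux hm hc
  have hPP : 0 ≤ PP m := by
    unfold PP
    have := DC_pos hm
    have := cC_pos hm
    have : (0:ℝ) < Real.sqrt (rhoC m) := Real.sqrt_pos.2 (rhoC_pos hm)
    positivity
  exact mul_nonneg hPP (Real.rpow_nonneg hX _)

lemma FF_le {m t : ℝ} (hm : 0 < m) (hc : 2 * |t| < cC m) : FF m t ≤ PP m := by
  rw [FF_eq hm hc]
  have hX : (0:ℝ) ≤ 1 - 4 * t^2 / cC m ^ 2 := hX_aux hm hc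
  have hPP : 0 ≤ PP m := by
    unfold PP
    have := DC_pos hm
    have h2 := cC_pos hm
    have : (0:ℝ) < Real.sqrt (rhoC m) := Real.sqrt_pos.2 (rhoC_pos hm)
    positivity
  have hle : (1 - 4 * t^2 / cC m ^ 2) ^ ((1:ℝ)/m) ≤ 1 := by
    apply Real.rpow_le_one hX _ (by positivity)
    have hcpos := cC_pos hm
    have h0 : 0 ≤ 4 * t^2 / cC m ^ 2 := by positivity
    linarith
  calc PP m * (1 - 4 * t^2 / cC m ^ 2) ^ ((1:ℝ)/m) ≤ PP m * 1 :=
        mul_le_mul_of_nonneg_left hle hPP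
    _ = PP m := mul_one _

lemma PP_tendsto : Tendsto PP (nhdsWithin 0 (Set.Ioi 0)) (nhds (1 / Real.sqrt (2 * π))) :=
  P_tendsto

lemma hXpos_aux {m t : ℝ} (hm : 0 < m) (hc : 2 * |t| < cC m) :
    (0:ℝ) < 1 - 4 * t^2 / cC m ^ 2 := by
  have hcpos := cC_pos hm
  have h1 : 4 * t^2 < cC m ^ 2 := by nlinarith [abs_nonneg t, sq_abs t]
  have h2 : 4 * t^2 / cC m ^ 2 < 1 := by
    rw [div_lt_one (by positivity)]; linarith
  linarith

lemma cC_sq_atTop : Tendsto (fun m : ℝ => cC m ^ 2) (nhdsWithin 0 (Set.Ioi 0)) atTop := by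
  have := cC_atTop.atTop_mul_atTop₀ cC_atTop
  apply this.congr
  intro m
  rw [sq]

lemma FF_pointwise (t : ℝ) :
    Tendsto (fun m : ℝ => FF m t) (nhdsWithin 0 (Set.Ioi 0))
      (nhds ((1 / Real.sqrt (2 * π)) * Real.exp (-(t^2) / 2))) := by
  have hev : ∀ᶠ m in nhdsWithin (0:ℝ) (Set.Ioi 0), 2 * |t| < cC m :=
    cC_atTop.eventually_gt_atTop (2 * |t|)
  by_cases ht : t = 0
  · subst ht
    have h0 : ((1:ℝ) / Real.sqrt (2 * π)) * Real.exp (-((0:ℝ)^2) / 2) = 1 / Real.sqrt (2 * π) := by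
      norm_num
    rw [h0]
    apply PP_tendsto.congr'
    filter_upwards [hev, self_mem_nhdsWithin] with m hc hm
    rw [Set.mem_Ioi] at hm
    rw [FF_eq hm hc]
    norm_num
  · -- main case
    have hu0 : Tendsto (fun m : ℝ => 4 * t^2 / cC m ^ 2) (nhdsWithin 0 (Set.Ioi 0)) (nhds 0) := by
      have h1 := (tendsto_inv_atTop_zero.comp cC_sq_atTop).const_mul (4 * t^2)
      rw [mul_zero] at h1
      apply h1.congr
      intro m
      simp [div_eq_mul_inv]
    have h1u : Tendsto (fun m : ℝ => 1 - 4 * t^2 / cC m ^ 2) (nhdsWithin 0 (Set.Ioi 0))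
        (nhdsWithin 1 {(1:ℝ)}ᶜ) := by
      rw [tendsto_nhdsWithin_iff]
      constructor
      · have hh : Tendsto (fun m : ℝ => (1:ℝ) - 4 * t^2 / cC m ^ 2)
            (nhdsWithin 0 (Set.Ioi 0)) (nhds (1 - 0)) := tendsto_const_nhds.sub hu0
        simpa using hh
      · filter_upwards [hev, self_mem_nhdsWithin] with m hc hm
        rw [Set.mem_Ioi] at hm
        have hcpos := cC_pos hm
        have hupos : 0 < 4 * t^2 / cC m ^ 2 := by
          have : 0 < t^2 := by positivity
          positivity
        simp only [Set.mem_compl_iff, Set.mem_singleton_iff]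
        intro hcon
        have : 4 * t^2 / cC m ^ 2 = 0 := by linarith [sub_eq_self.1 hcon]
        linarith
    have hslope : Tendsto (slope Real.log 1) (nhdsWithin 1 {(1:ℝ)}ᶜ) (nhds 1) := by
      have := hasDerivAt_iff_tendsto_slope.1 (Real.hasDerivAt_log one_ne_zero)
      rwa [inv_one] at this
    have hcomp := hslope.comp h1u
    have hcoef : Tendsto (fun m : ℝ => -(4 * t^2) / (m * cC m ^ 2)) (nhdsWithin 0 (Set.Ioi 0))
        (nhds (-(4 * t^2) / 8)) := tendsto_const_nhds.div mcC_sq_tendsto (by norm_num)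
    have hE := hcomp.mul hcoef
    rw [one_mul] at hE
    have hE' : Tendsto (fun m : ℝ => Real.log (1 - 4 * t^2 / cC m ^ 2) * ((1:ℝ)/m))
        (nhdsWithin 0 (Set.Ioi 0)) (nhds (-(t^2) / 2)) := by
      have hval : -(4 * t^2) / 8 = -(t^2) / 2 := by ring
      rw [← hval]
      apply hE.congr'
      filter_upwards [hev, self_mem_nhdsWithin] with m hc hm
      rw [Set.mem_Ioi] at hm
      have hcpos := cC_pos hm
      have hune : 4 * t^2 / cC m ^ 2 ≠ 0 := by
        have : 0 < t^2 := by positivity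
        positivity
      simp only [Function.comp_apply]
      rw [slope_def_field, Real.log_one]
      field_simp
      ring
    have hexp := (Real.continuous_exp.tendsto _).comp hE'
    have hfinal := PP_tendsto.mul hexp
    apply hfinal.congr'
    filter_upwards [hev, self_mem_nhdsWithin] with m hc hm
    rw [Set.mem_Ioi] at hm
    rw [FF_eq hm hc, Real.rpow_def_of_pos (hXpos_aux hm hc)]
    rfl

lemma limitCDF_eventual (x : ℝ) : ∀ᶠ m in nhdsWithin (0:ℝ) (Set.Ioi 0),
    limitCDF m x = 1/2 + ∫ t in (0:ℝ)..x, FF m t := by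
  filter_upwards [cC_atTop.eventually_gt_atTop (2 * |x|), self_mem_nhdsWithin] with m hc hm
  rw [Set.mem_Ioi] at hm
  have hcpos := cC_pos hm
  have ha : (0:ℝ) < (m + 1) / m := by positivity
  have hB := betaFn_pos ha ha
  have habs : |x / cC m| < 1/2 := by
    rw [abs_div, abs_of_pos hcpos, div_lt_iff₀ hcpos]; linarith
  obtain ⟨hl, hr⟩ := abs_lt.1 habs
  have hbound : min (max (1/2 + x / cC m) 0) 1 = 1/2 + x / cC m := by
    rw [max_eq_left (by linarith), min_eq_left (by linarith)]
  have hcont := contF hm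
  have hint1 : IntervalIntegrable (fun y : ℝ => y ^ (1/m) * (1 - y) ^ (1/m)) volume 0 (1/2) :=
    hcont.intervalIntegrable _ _
  have hint2 : IntervalIntegrable (fun y : ℝ => y ^ (1/m) * (1 - y) ^ (1/m)) volume (1/2)
      (1/2 + x / cC m) := hcont.intervalIntegrable _ _
  have hint3 : IntervalIntegrable (fun y : ℝ => y ^ (1/m) * (1 - y) ^ (1/m)) volume (1/2) 1 :=
    hcont.intervalIntegrable _ _
  have hfull : ∫ y in (0:ℝ)..1, y ^ (1/m) * (1 - y) ^ (1/m)
      = betaFn ((m + 1) / m) ((m + 1) / m) := by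
    have h := real_beta_integral ha ha
    have he : (m + 1) / m - 1 = 1/m := by field_simp; ring
    simp only [he] at h
    exact h
  have hrefl : ∫ y in (1/2 : ℝ)..1, y ^ (1/m) * (1 - y) ^ (1/m)
      = ∫ y in (0:ℝ)..(1/2), y ^ (1/m) * (1 - y) ^ (1/m) := by
    have h := intervalIntegral.integral_comp_sub_left (a := 1/2) (b := 1)
      (fun y : ℝ => y ^ (1/m) * (1 - y) ^ (1/m)) 1
    rw [show (1:ℝ) - 1 = 0 by norm_num, show (1:ℝ) - 1/2 = 1/2 by norm_num] at h
    rw [← h]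
    apply intervalIntegral.integral_congr
    intro y _
    simp only
    rw [show (1:ℝ) - (1 - y) = y by ring]
    ring
  have hhalf : ∫ y in (0:ℝ)..(1/2), y ^ (1/m) * (1 - y) ^ (1/m)
      = betaFn ((m + 1) / m) ((m + 1) / m) / 2 := by
    have hadd := intervalIntegral.integral_add_adjacent_intervals hint1 hint3
    rw [hfull] at hadd
    linarith [hrefl, hadd]
  have hsplit := (intervalIntegral.integral_add_adjacent_intervals hint1 hint2).symm
  have hsub := intervalIntegral.integral_comp_mul_add (a := 0) (b := x)
    (fun y : ℝ => y ^ (1/m) * (1 - y) ^ (1/m)) (inv_ne_zero hcpos.ne') (1/2)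
  rw [show (cC m)⁻¹ * 0 + 1/2 = (1/2 : ℝ) by norm_num,
    show (cC m)⁻¹ * x + 1/2 = 1/2 + x / cC m by ring, inv_inv, smul_eq_mul] at hsub
  have hFF : ∫ t in (0:ℝ)..x, FF m t
      = (betaFn ((m + 1) / m) ((m + 1) / m) * cC m)⁻¹ *
        ∫ t in (0:ℝ)..x, ((cC m)⁻¹ * t + 1/2) ^ (1/m) * (1 - ((cC m)⁻¹ * t + 1/2)) ^ (1/m) := by
    rw [← intervalIntegral.integral_const_mul]
    apply intervalIntegral.integral_congr
    intro t _
    have e1 : (cC m)⁻¹ * t + 1/2 = 1/2 + t / cC m := by ring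
    have e2 : 1 - ((cC m)⁻¹ * t + 1/2) = 1/2 - t / cC m := by ring
    simp only [e1]
    simp only [show (1:ℝ) - (1/2 + t / cC m) = 1/2 - t / cC m by ring]
    rfl
  unfold limitCDF
  rw [hbound, hsplit, hhalf, hFF]
  have hIeq : ∫ y in (1/2:ℝ)..(1/2 + x / cC m), y ^ (1/m) * (1 - y) ^ (1/m)
      = (cC m)⁻¹ * ∫ t in (0:ℝ)..x,
          ((cC m)⁻¹ * t + 1/2) ^ (1/m) * (1 - ((cC m)⁻¹ * t + 1/2)) ^ (1/m) := by
    rw [hsub, ← mul_assoc, inv_mul_cancel₀ hcpos.ne', one_mul]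
  rw [hIeq]
  set J := ∫ t in (0:ℝ)..x,
      ((cC m)⁻¹ * t + 1/2) ^ (1/m) * (1 - ((cC m)⁻¹ * t + 1/2)) ^ (1/m) with hJ
  set B := betaFn ((m + 1) / m) ((m + 1) / m) with hBdef
  have h1 : (1/B) * (B/2) = 1/2 := by field_simp
  have h2 : (1/B) * ((cC m)⁻¹ * J) = (B * cC m)⁻¹ * J := by
    rw [mul_inv]; ring
  rw [mul_add, h1, h2]

lemma contFF {m : ℝ} (hm : 0 < m) : Continuous (FF m) := by
  unfold FF
  apply continuous_const.mul
  apply Continuous.mul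
  · rw [continuous_iff_continuousAt]
    intro t
    exact (Real.continuousAt_rpow_const _ (1/m) (Or.inr (by positivity))).comp (by fun_prop)
  · rw [continuous_iff_continuousAt]
    intro t
    exact (Real.continuousAt_rpow_const _ (1/m) (Or.inr (by positivity))).comp (by fun_prop)

lemma PP_eventually_le_one : ∀ᶠ m in nhdsWithin (0:ℝ) (Set.Ioi 0), PP m ≤ 1 := by
  have h2π : (1:ℝ) < 2 * π := by nlinarith [Real.pi_gt_three]
  have hs : (1:ℝ) < Real.sqrt (2 * π) := by
    have := Real.sqrt_lt_sqrt (by norm_num : (0:ℝ) ≤ 1) h2π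
    rwa [Real.sqrt_one] at this
  have hlt : (1:ℝ) / Real.sqrt (2 * π) < 1 := by
    rw [div_lt_one (by positivity)]
    exact hs
  filter_upwards [PP_tendsto.eventually_lt_const hlt] with m hmlt
  exact hmlt.le

lemma abs_le_of_mem_uIoc {t x : ℝ} (ht : t ∈ Set.uIoc (0:ℝ) x) : |t| ≤ |x| := by
  rcases Set.mem_uIoc.1 ht with h | h
  · rw [abs_of_pos h.1]
    exact le_trans h.2 (le_abs_self x)
  · rw [abs_of_nonpos h.2]
    calc -t ≤ -x := by linarith [h.1]
      _ ≤ |x| := neg_le_abs x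

lemma integral_FF_tendsto (x : ℝ) :
    Tendsto (fun m : ℝ => ∫ t in (0:ℝ)..x, FF m t) (nhdsWithin 0 (Set.Ioi 0))
      (nhds (∫ t in (0:ℝ)..x, (1 / Real.sqrt (2 * π)) * Real.exp (-(t^2) / 2))) := by
  apply intervalIntegral.tendsto_integral_filter_of_dominated_convergence (fun _ => (1:ℝ))
  · filter_upwards [self_mem_nhdsWithin] with m hm
    rw [Set.mem_Ioi] at hm
    exact (contFF hm).aestronglyMeasurable.restrict
  · filter_upwards [cC_atTop.eventually_gt_atTop (2 * |x|), self_mem_nhdsWithin,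
      PP_eventually_le_one] with m hc hm hP
    rw [Set.mem_Ioi] at hm
    apply ae_of_all
    intro t ht
    have hct : 2 * |t| < cC m := by
      have := abs_le_of_mem_uIoc ht
      linarith
    rw [Real.norm_eq_abs, abs_of_nonneg (FF_nonneg hm hct)]
    exact (FF_le hm hct).trans hP
  · exact intervalIntegrable_const
  · exact ae_of_all _ fun t _ => FF_pointwise t

lemma gaussian_Iic_eq (x : ℝ) :
    ∫ y in Set.Iic x, Real.exp (-(y^2) / 2)
      = Real.sqrt (2 * π) / 2 + ∫ t in (0:ℝ)..x, Real.exp (-(t^2) / 2) := by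
  have hfun : (fun y : ℝ => Real.exp (-(y^2) / 2)) = fun y : ℝ => Real.exp (-(1/2) * y^2) := by
    funext y
    rw [show -(y^2)/2 = -(1/2) * y^2 by ring]
  have hInt : Integrable (fun y : ℝ => Real.exp (-(1/2) * y^2)) :=
    integrable_exp_neg_mul_sq (by norm_num)
  have hIic0 : ∫ y in Set.Iic (0:ℝ), Real.exp (-(1/2) * y^2) = Real.sqrt (2 * π) / 2 := by
    have h1 := integral_comp_neg_Ioi (0:ℝ) (fun y : ℝ => Real.exp (-(1/2) * y^2))
    rw [neg_zero] at h1
    have h2 : (∫ y in Set.Ioi (0:ℝ), Real.exp (-(1/2) * (-y)^2))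
        = ∫ y in Set.Ioi (0:ℝ), Real.exp (-(1/2) * y^2) := by
      apply setIntegral_congr_fun measurableSet_Ioi
      intro y _
      simp
    rw [← h1, h2, integral_gaussian_Ioi]
    rw [show π / (1/2 : ℝ) = 2 * π by ring]
  have hsplit := intervalIntegral.integral_Iic_sub_Iic (f := fun y : ℝ => Real.exp (-(1/2) * y^2))
    (μ := volume) (a := 0) (b := x) hInt.integrableOn hInt.integrableOn
  rw [hfun, hsplit.symm, hIic0]
  ring

theorem statement14 (x : ℝ) :
    Tendsto (fun m : ℝ => limitCDF m x) (nhdsWithin 0 (Set.Ioi 0))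
      (nhds ((1 / Real.sqrt (2 * π)) * ∫ y in Set.Iic x, Real.exp (-(y ^ 2) / 2))) := by
  have hI := integral_FF_tendsto x
  have hmain : Tendsto (fun m : ℝ => 1/2 + ∫ t in (0:ℝ)..x, FF m t)
      (nhdsWithin 0 (Set.Ioi 0))
      (nhds (1/2 + ∫ t in (0:ℝ)..x, (1 / Real.sqrt (2 * π)) * Real.exp (-(t^2) / 2))) :=
    tendsto_const_nhds.add hI
  have hval : 1/2 + (∫ t in (0:ℝ)..x, (1 / Real.sqrt (2 * π)) * Real.exp (-(t^2) / 2))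
      = (1 / Real.sqrt (2 * π)) * ∫ y in Set.Iic x, Real.exp (-(y ^ 2) / 2) := by
    rw [gaussian_Iic_eq, intervalIntegral.integral_const_mul, mul_add]
    have hne : Real.sqrt (2 * π) ≠ 0 := by positivity
    have h12 : (1 / Real.sqrt (2 * π)) * (Real.sqrt (2 * π) / 2) = 1/2 := by
      field_simp
    rw [h12]
  rw [hval] at hmain
  exact hmain.congr' ((limitCDF_eventual x).mono fun m hm => hm.symm)
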